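/- arXiv:1708.01545 — 6 statements merged into one kernel-verified Lean document; each statement's English description precedes it below -/
import Mathlib

section
/- Let A, D : X → X' be non-negative linear operators with square roots (R_A, H_A) and (R_D, H_D) respectively. Then A ≤ α²D for some α ∈ [0, ∞) if and only if there exists a bounded linear operator W : H_A → H_D with ‖W‖ ≤ α and R_A* = R_D* ∘ W. Moreover, there is a unique such W with range contained in the closure of ran R_D, and for this W one has ker W = ker R_A*. -/
open scoped ComplexOrder ComplexConjugate
open Complex

noncomputable section

/-- For a linear map `R : V → H` into a Hilbert space, `adjMap R : H → V'` is the
operator `R*`, sending `h` to the antilinear functional `v ↦ (h | R v)`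
(in Mathlib's convention, `v ↦ ⟪R v, h⟫`). -/
def adjMap {V H : Type*} [AddCommGroup V] [Module ℂ V]
    [NormedAddCommGroup H] [InnerProductSpace ℂ H] (R : V →ₗ[ℂ] H) :
    H →ₗ[ℂ] (V →ₗ⋆[ℂ] ℂ) where
  toFun h :=
    { toFun := fun v => @inner ℂ _ _ (R v) h
      map_add' := fun v w => by simp [inner_add_left]
      map_smul' := fun c v => by simp [inner_smul_left, mul_comm] }
  map_add' h₁ h₂ := by ext v; simp [inner_add_right]
  map_smul' c h := by ext v; simp [inner_smul_right]

/-- For `B : Y → X'`, the operator `B~ := B'↾X : X → Y'`, `(B~ x) y = conj (⟨B y, x⟩)`. -/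
def Btilde {X Y : Type*} [AddCommGroup X] [Module ℂ X] [AddCommGroup Y] [Module ℂ Y]
    (B : Y →ₗ[ℂ] (X →ₗ⋆[ℂ] ℂ)) : X →ₗ[ℂ] (Y →ₗ⋆[ℂ] ℂ) where
  toFun x :=
    { toFun := fun y => conj (B y x)
      map_add' := fun y₁ y₂ => by simp
      map_smul' := fun c y => by simp }
  map_add' x₁ x₂ := by ext y; simp
  map_smul' c x := by ext y; simp

lemma adjMap_apply {V H : Type*} [AddCommGroup V] [Module ℂ V]
    [NormedAddCommGroup H] [InnerProductSpace ℂ H] (R : V →ₗ[ℂ] H) (h : H) (v : V) :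
    adjMap R h v = @inner ℂ _ _ (R v) h := rfl

-- construction of W
lemma exists_W {X HA HD : Type} [AddCommGroup X] [Module ℂ X]
    [NormedAddCommGroup HA] [InnerProductSpace ℂ HA] [CompleteSpace HA]
    [NormedAddCommGroup HD] [InnerProductSpace ℂ HD] [CompleteSpace HD]
    (RA : X →ₗ[ℂ] HA) (RD : X →ₗ[ℂ] HD) (α : ℝ) (hα : 0 ≤ α)
    (hle : ∀ x, ‖RA x‖ ≤ α * ‖RD x‖) :
    ∃ W : HA →L[ℂ] HD, ‖W‖ ≤ α ∧ (∀ h x, (inner ℂ (RA x) h : ℂ) = inner ℂ (RD x) (W h)) ∧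
      Set.range W ⊆ closure (Set.range RD) := by
  have hker : LinearMap.ker RD ≤ LinearMap.ker RA := by
    intro x hx
    rw [LinearMap.mem_ker] at hx ⊢
    have := hle x
    rw [hx, norm_zero, mul_zero] at this
    exact norm_le_zero_iff.mp this
  set S := LinearMap.range RD with hS
  let T : ↥S →ₗ[ℂ] HA :=
    ((LinearMap.ker RD).liftQ RA hker).comp (LinearMap.quotKerEquivRange RD).symm.toLinearMap
  have hT : ∀ (x : X) (hx : RD x ∈ S), T ⟨RD x, hx⟩ = RA x := by
    intro x hx
    show ((LinearMap.ker RD).liftQ RA hker) ((LinearMap.quotKerEquivRange RD).symm ⟨RD x, hx⟩) = RA x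
    rw [LinearMap.quotKerEquivRange_symm_apply_image]
    simp
  have hTb : ∀ y : ↥S, ‖T y‖ ≤ α * ‖y‖ := by
    rintro ⟨y, x, rfl⟩
    rw [hT x ⟨x, rfl⟩]
    simpa using hle x
  let Tc : ↥S →L[ℂ] HA := T.mkContinuous α hTb
  have hTcnorm : ‖Tc‖ ≤ α := LinearMap.mkContinuous_norm_le _ hα _
  set K := S.topologicalClosure with hK
  haveI : CompleteSpace ↥K := (Submodule.isClosed_topologicalClosure S).completeSpace_coe
  let ιlin : ↥S →ₗ[ℂ] ↥K := Submodule.inclusion (Submodule.le_topologicalClosure S)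
  let ι : ↥S →L[ℂ] ↥K := ιlin.mkContinuous 1 (fun y => by simp [ιlin, Submodule.inclusion])
  have hιb : ∀ y : ↥S, ‖y‖ ≤ (1 : NNReal) * ‖ι y‖ := fun y => by
    simp [ι, ιlin, LinearMap.mkContinuous_apply, Submodule.inclusion]
  have hdense : DenseRange ι := by
    intro k
    rw [closure_subtype]
    have hk : (k : HD) ∈ closure (S : Set HD) := by
      rw [← Submodule.topologicalClosure_coe]; exact k.2
    have himg : (Subtype.val '' Set.range ι : Set HD) = (S : Set HD) := by
      ext v
      constructor
      · rintro ⟨-, ⟨y, rfl⟩, rfl⟩; exact y.2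
      · intro hv; exact ⟨ι ⟨v, hv⟩, ⟨⟨v, hv⟩, rfl⟩, rfl⟩
    rw [himg]
    exact hk
  let C : ↥K →L[ℂ] HA :=
    Tc.extend ι
  have hCnorm : ‖C‖ ≤ α := by
    have := Tc.opNorm_extend_le hdense hιb
    simpa using this.trans (by simpa using hTcnorm)
  have hCeq : ∀ y : ↥S, C (ι y) = Tc y := fun y => Tc.extend_eq hdense (ContinuousLinearMap.isUniformEmbedding_of_bound ι hιb).isUniformInducing y
  let W : HA →L[ℂ] HD := K.subtypeL.comp (ContinuousLinearMap.adjoint C)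
  refine ⟨W, ?_, ?_, ?_⟩
  · refine ContinuousLinearMap.opNorm_le_bound _ hα fun h => ?_
    have : ‖W h‖ = ‖(ContinuousLinearMap.adjoint C) h‖ := rfl
    rw [this]
    calc ‖(ContinuousLinearMap.adjoint C) h‖ ≤ ‖ContinuousLinearMap.adjoint C‖ * ‖h‖ :=
          ContinuousLinearMap.le_opNorm _ _
      _ ≤ α * ‖h‖ := by
          apply mul_le_mul_of_nonneg_right _ (norm_nonneg h)
          rw [LinearIsometryEquiv.norm_map]
          exact hCnorm
  · intro h x
    have hmem : RD x ∈ S := ⟨x, rfl⟩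
    have hcoe : ((ι ⟨RD x, hmem⟩ : ↥K) : HD) = RD x := rfl
    calc (inner ℂ (RA x) h : ℂ) = inner ℂ (C (ι ⟨RD x, hmem⟩)) h := by
          rw [hCeq]
          rw [show Tc ⟨RD x, hmem⟩ = T ⟨RD x, hmem⟩ from rfl, hT]
      _ = inner ℂ (ι ⟨RD x, hmem⟩) ((ContinuousLinearMap.adjoint C) h) :=
          (ContinuousLinearMap.adjoint_inner_right _ _ _).symm
      _ = inner ℂ (RD x) (W h) := by
          rw [Submodule.coe_inner]  -- check direction
          rfl
  · rintro _ ⟨h, rfl⟩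
    have : W h = ((ContinuousLinearMap.adjoint C) h : HD) := rfl
    rw [this, ← LinearMap.coe_range RD, ← Submodule.topologicalClosure_coe]
    exact ((ContinuousLinearMap.adjoint C) h).2

theorem schur_stmt3 {X HA HD : Type} [AddCommGroup X] [Module ℂ X]
    [NormedAddCommGroup HA] [InnerProductSpace ℂ HA] [CompleteSpace HA]
    [NormedAddCommGroup HD] [InnerProductSpace ℂ HD] [CompleteSpace HD]
    (A D : X →ₗ[ℂ] (X →ₗ⋆[ℂ] ℂ))
    (RA : X →ₗ[ℂ] HA) (RD : X →ₗ[ℂ] HD)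
    (hA : ∀ x, 0 ≤ A x x) (hD : ∀ x, 0 ≤ D x x)
    (hRA : ∀ x, A x = adjMap RA (RA x)) (hRD : ∀ x, D x = adjMap RD (RD x))
    (α : ℝ) (hα : 0 ≤ α) :
    ((∀ x, A x x ≤ (α : ℂ) ^ 2 * D x x) ↔
        ∃ W : HA →L[ℂ] HD, ‖W‖ ≤ α ∧ ∀ h, adjMap RA h = adjMap RD (W h)) ∧
      ((∀ x, A x x ≤ (α : ℂ) ^ 2 * D x x) →
        (∃! W : HA →L[ℂ] HD, ‖W‖ ≤ α ∧ (∀ h, adjMap RA h = adjMap RD (W h)) ∧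
            Set.range W ⊆ closure (Set.range RD)) ∧
          ∀ W : HA →L[ℂ] HD,
            (‖W‖ ≤ α ∧ (∀ h, adjMap RA h = adjMap RD (W h)) ∧
              Set.range W ⊆ closure (Set.range RD)) →
            ∀ h, W h = 0 ↔ adjMap RA h = 0) := by
  have hAx : ∀ x, A x x = ((‖RA x‖ : ℂ)) ^ 2 := fun x => by
    rw [hRA x, adjMap_apply, inner_self_eq_norm_sq_to_K]; norm_cast
  have hDx : ∀ x, D x x = ((‖RD x‖ : ℂ)) ^ 2 := fun x => by
    rw [hRD x, adjMap_apply, inner_self_eq_norm_sq_to_K]; norm_cast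
  have adjEq : ∀ (h : HA) (w : HD),
      adjMap RA h = adjMap RD w ↔ ∀ x, (inner ℂ (RA x) h : ℂ) = inner ℂ (RD x) w := by
    intro h w
    constructor
    · intro he x
      have := LinearMap.ext_iff.mp he x
      simpa [adjMap_apply] using this
    · intro he; ext x; simpa [adjMap_apply] using he x
  have adjZero : ∀ h : HA, adjMap RA h = 0 ↔ ∀ x, (inner ℂ (RA x) h : ℂ) = 0 := by
    intro h
    constructor
    · intro he x
      have := LinearMap.ext_iff.mp he x
      simpa [adjMap_apply] using this
    · intro he; ext x; simpa [adjMap_apply] using he x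
  have horth : ∀ v : HD, v ∈ closure (Set.range RD) →
      (∀ x, (inner ℂ (RD x) v : ℂ) = 0) → v = 0 := by
    intro v hv h0
    have hcont : Continuous fun w : HD => (inner ℂ w v : ℂ) :=
      Continuous.inner continuous_id continuous_const
    have hclosed : IsClosed {w : HD | (inner ℂ w v : ℂ) = 0} :=
      isClosed_eq hcont continuous_const
    have hsub : Set.range RD ⊆ {w : HD | (inner ℂ w v : ℂ) = 0} := by
      rintro _ ⟨x, rfl⟩; exact h0 x
    have hvv : (inner ℂ v v : ℂ) = 0 := closure_minimal hsub hclosed hv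
    exact inner_self_eq_zero.mp hvv
  have key : (∀ x, A x x ≤ (α : ℂ) ^ 2 * D x x) ↔ ∀ x, ‖RA x‖ ≤ α * ‖RD x‖ := by
    have hcast : ∀ x, (α : ℂ) ^ 2 * D x x = (((α * ‖RD x‖) ^ 2 : ℝ) : ℂ) := fun x => by
      rw [hDx]; push_cast; ring
    have hcast2 : ∀ x, A x x = ((‖RA x‖ ^ 2 : ℝ) : ℂ) := fun x => by
      rw [hAx]; push_cast; ring
    constructor
    · intro hle x
      have := hle x
      rw [hcast, hcast2, Complex.real_le_real] at this
      exact (pow_le_pow_iff_left₀ (norm_nonneg _) (mul_nonneg hα (norm_nonneg _))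
        two_ne_zero).mp this
    · intro hle x
      rw [hcast, hcast2, Complex.real_le_real]
      exact pow_le_pow_left₀ (norm_nonneg _) (hle x) 2
  constructor
  · constructor
    · intro hle
      obtain ⟨W, hWn, hWe, -⟩ := exists_W RA RD α hα (key.mp hle)
      exact ⟨W, hWn, fun h => (adjEq h (W h)).mpr (hWe h)⟩
    · rintro ⟨W, hWn, hWe⟩
      rw [key]
      intro x
      have hip : (inner ℂ (RA x) (RA x) : ℂ) = inner ℂ (RD x) (W (RA x)) :=
        (adjEq _ _).mp (hWe (RA x)) x
      have h1 : ‖RA x‖ ^ 2 ≤ α * ‖RD x‖ * ‖RA x‖ := by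
        have h2 : ‖(inner ℂ (RA x) (RA x) : ℂ)‖ = ‖RA x‖ ^ 2 := by
          rw [inner_self_eq_norm_sq_to_K]
          simp
        calc ‖RA x‖ ^ 2 = ‖(inner ℂ (RD x) (W (RA x)) : ℂ)‖ := by rw [← hip, h2]
          _ ≤ ‖RD x‖ * ‖W (RA x)‖ := norm_inner_le_norm _ _
          _ ≤ ‖RD x‖ * (α * ‖RA x‖) := by
              apply mul_le_mul_of_nonneg_left _ (norm_nonneg _)
              calc ‖W (RA x)‖ ≤ ‖W‖ * ‖RA x‖ := W.le_opNorm _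
                _ ≤ α * ‖RA x‖ := mul_le_mul_of_nonneg_right hWn (norm_nonneg _)
          _ = α * ‖RD x‖ * ‖RA x‖ := by ring
      rcases eq_or_ne ‖RA x‖ 0 with h0 | h0
      · rw [h0]; positivity
      · have hpos : 0 < ‖RA x‖ := lt_of_le_of_ne (norm_nonneg _) (Ne.symm h0)
        rw [pow_two] at h1
        exact le_of_mul_le_mul_right h1 hpos
  · intro hle
    obtain ⟨W, hWn, hWe, hWr⟩ := exists_W RA RD α hα (key.mp hle)
    have memK : ∀ (W' : HA →L[ℂ] HD), Set.range W' ⊆ closure (Set.range RD) →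
        ∀ h, W' h ∈ (LinearMap.range RD).topologicalClosure := by
      intro W' hr h
      rw [← SetLike.mem_coe, Submodule.topologicalClosure_coe, LinearMap.coe_range]
      exact hr (Set.mem_range_self h)
    have huniq : ∀ W' : HA →L[ℂ] HD, (‖W'‖ ≤ α ∧ (∀ h, adjMap RA h = adjMap RD (W' h)) ∧
        Set.range W' ⊆ closure (Set.range RD)) → W' = W := by
      rintro W' ⟨-, hWe', hWr'⟩
      ext h
      have hd : ∀ x, (inner ℂ (RD x) (W' h - W h) : ℂ) = 0 := by
        intro x
        rw [inner_sub_right]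
        have e1 := (adjEq h (W' h)).mp (hWe' h) x
        have e2 := hWe h x
        rw [← e1, ← e2, sub_self]
      have hmem : W' h - W h ∈ closure (Set.range RD) := by
        have h3 := Submodule.sub_mem _ (memK W' hWr' h) (memK W hWr h)
        rwa [← SetLike.mem_coe, Submodule.topologicalClosure_coe, LinearMap.coe_range] at h3
      exact sub_eq_zero.mp (horth _ hmem hd)
    refine ⟨⟨W, ⟨hWn, fun h => (adjEq _ _).mpr (hWe h), hWr⟩, huniq⟩, ?_⟩
    rintro W' ⟨hWn', hWe', hWr'⟩ h
    constructor
    · intro h0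
      rw [adjZero]
      intro x
      have := (adjEq h (W' h)).mp (hWe' h) x
      rw [this, h0, inner_zero_right]
    · intro h0
      have hd : ∀ x, (inner ℂ (RD x) (W' h) : ℂ) = 0 := by
        intro x
        have := (adjEq h (W' h)).mp (hWe' h) x
        rw [← this]
        exact (adjZero h).mp h0 x
      exact horth _ (hWr' (Set.mem_range_self h)) hd
end
end

section
/- If (R, H) is a square root of a non-negative operator A : X → X' and (S, G) is a minimal square root of A (i.e., ran S dense in G), then there exists an isometry U : G → H such that U ∘ S = R. -/
open scoped ComplexOrder ComplexConjugate
open Complex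

noncomputable section

theorem schur_stmt6 {X H G : Type} [AddCommGroup X] [Module ℂ X]
    [NormedAddCommGroup H] [InnerProductSpace ℂ H] [CompleteSpace H]
    [NormedAddCommGroup G] [InnerProductSpace ℂ G] [CompleteSpace G]
    (A : X →ₗ[ℂ] (X →ₗ⋆[ℂ] ℂ)) (R : X →ₗ[ℂ] H) (S : X →ₗ[ℂ] G)
    (hA : ∀ x, 0 ≤ A x x)
    (hR : ∀ x, A x = adjMap R (R x)) (hS : ∀ x, A x = adjMap S (S x))
    (hmin : DenseRange S) :
    ∃ U : G →ₗᵢ[ℂ] H, ∀ x, U (S x) = R x := by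
  have hRS : ∀ x, ‖R x‖ = ‖S x‖ := by
    intro x
    have h1 : (inner ℂ (R x) (R x) : ℂ) = inner ℂ (S x) (S x) := by
      have h := (hR x).symm.trans (hS x)
      exact congrArg (fun f => f x) h
    have h2 : ‖R x‖ ^ 2 = ‖S x‖ ^ 2 := by
      rw [inner_self_eq_norm_sq_to_K, inner_self_eq_norm_sq_to_K] at h1
      exact_mod_cast h1
    have := congrArg Real.sqrt h2
    simpa [Real.sqrt_sq (norm_nonneg _)] using this
  -- factor R through range S
  have hker : LinearMap.ker S ≤ LinearMap.ker R := by
    intro x hx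
    simp only [LinearMap.mem_ker] at hx ⊢
    have := hRS x
    rw [hx, norm_zero] at this
    exact norm_eq_zero.mp this
  let q : X ⧸ LinearMap.ker S →ₗ[ℂ] H := (LinearMap.ker S).liftQ R hker
  let e : (X ⧸ LinearMap.ker S) ≃ₗ[ℂ] LinearMap.range S := S.quotKerEquivRange
  let f₀ : LinearMap.range S →ₗ[ℂ] H := q.comp (e.symm : LinearMap.range S →ₗ[ℂ] _)
  have hf₀ : ∀ x : X, f₀ ⟨S x, LinearMap.mem_range_self S x⟩ = R x := by
    intro x
    have he : e ((LinearMap.ker S).mkQ x) = ⟨S x, LinearMap.mem_range_self S x⟩ := by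
      rfl
    simp only [f₀, LinearMap.comp_apply]
    rw [← he, LinearEquiv.coe_coe, LinearEquiv.symm_apply_apply]
    rfl
  have hnorm : ∀ g : LinearMap.range S, ‖f₀ g‖ = ‖g‖ := by
    rintro ⟨_, x, rfl⟩
    rw [hf₀ x]
    exact (hRS x).trans rfl
  let fi : LinearMap.range S →ₗᵢ[ℂ] H := ⟨f₀, hnorm⟩
  let ec : LinearMap.range S →L[ℂ] G := (LinearMap.range S).subtypeL
  have hd : DenseRange ec := by
    have : DenseRange ((↑) : LinearMap.range S → G) := by
      rw [denseRange_iff_closure_range]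
      have : Set.range ((↑) : LinearMap.range S → G) = Set.range S := by
        rw [Subtype.range_coe]
        ext g; simp [LinearMap.mem_range, Set.mem_range]
      rw [this, hmin.closure_range]
    exact this
  have hue : IsUniformInducing ec := isometry_subtype_coe.isUniformInducing
  let U : G →L[ℂ] H := fi.toContinuousLinearMap.extend ec
  have hUeq : ∀ g : LinearMap.range S, U (ec g) = fi g := fun g =>
    ContinuousLinearMap.extend_eq (f := _) (e := ec) hd hue g
  have hUiso : ∀ g : G, ‖U g‖ = ‖g‖ := by
    refine fun g => hd.induction_on g ?_ ?_
    · exact isClosed_eq (continuous_norm.comp U.continuous) continuous_norm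
    · intro a
      rw [hUeq]
      exact (fi.norm_map a).trans rfl
  refine ⟨⟨U.toLinearMap, hUiso⟩, fun x => ?_⟩
  show U (S x) = R x
  rw [show S x = ec ⟨S x, LinearMap.mem_range_self S x⟩ from rfl, hUeq]
  exact hf₀ x
end
end

section
/- (i) If 𝐀 is an operator of positive type on X × Y, then 𝒮(𝐀) ≤ 𝐀 and ker 𝐀 ⊆ ker 𝒮(𝐀). (ii) If 𝐀, 𝐀₁ are of positive type and 𝐀 ≤ 𝐀₁ (in the Loewner semi-ordering), then 𝒮(𝐀) ≤ 𝒮(𝐀₁). (iii) If 𝐀 is non-negative, then 𝒮(𝐀) is non-negative. -/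
open scoped ComplexOrder ComplexConjugate
open Complex

noncomputable section

section Helpers

variable {X Y H : Type*} [AddCommGroup X] [Module ℂ X] [AddCommGroup Y] [Module ℂ Y]
  [NormedAddCommGroup H] [InnerProductSpace ℂ H]

local notation "⟪" a ", " b "⟫" => @inner ℂ _ _ a b

lemma adjMap_apply' (R : X →ₗ[ℂ] H) (h : H) (x : X) : adjMap R h x = ⟪R x, h⟫ := rfl

lemma Btilde_apply' (B : Y →ₗ[ℂ] (X →ₗ⋆[ℂ] ℂ)) (x : X) (y : Y) :
    Btilde B x y = conj (B y x) := rfl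

lemma quad_eq (A : X →ₗ[ℂ] (X →ₗ⋆[ℂ] ℂ)) (B : Y →ₗ[ℂ] (X →ₗ⋆[ℂ] ℂ))
    (D : Y →ₗ[ℂ] (Y →ₗ⋆[ℂ] ℂ)) (R : X →ₗ[ℂ] H) (T : Y →ₗ[ℂ] H)
    (hR : ∀ x, A x = adjMap R (R x)) (hT : ∀ y, adjMap R (T y) = B y) (x : X) (y : Y) :
    (A x + B y) x + ((Btilde B) x + D y) y
      = ⟪R x + T y, R x + T y⟫ + (D y - adjMap T (T y)) y := by
  have hA : A x x = ⟪R x, R x⟫ := by rw [hR]; rfl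
  have hB : B y x = ⟪R x, T y⟫ := by rw [← hT]; rfl
  simp only [LinearMap.add_apply, LinearMap.sub_apply, Btilde_apply', adjMap_apply', hA, hB,
    inner_add_left, inner_add_right, inner_conj_symm]
  ring

lemma approx (R : X →ₗ[ℂ] H) (T : Y →ₗ[ℂ] H)
    (hTran : ∀ y, T y ∈ closure (Set.range R)) (y : Y) {ε : ℝ} (hε : 0 < ε) :
    ∃ x, ‖R x + T y‖ ^ 2 < ε := by
  have h := hTran (-y)
  rw [map_neg] at h
  obtain ⟨b, ⟨x, rfl⟩, hb⟩ := Metric.mem_closure_iff.mp h (Real.sqrt ε) (Real.sqrt_pos.mpr hε)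
  refine ⟨x, ?_⟩
  have h1 : ‖R x + T y‖ < Real.sqrt ε := by
    rw [dist_eq_norm] at hb
    have : -T y - R x = -(R x + T y) := by abel
    rw [this, norm_neg] at hb
    exact hb
  calc ‖R x + T y‖ ^ 2 < Real.sqrt ε ^ 2 :=
        pow_lt_pow_left₀ h1 (norm_nonneg _) two_ne_zero
    _ = ε := Real.sq_sqrt hε.le

lemma complex_le_of_forall_add {z w : ℂ} (h : ∀ ε : ℝ, 0 < ε → z ≤ w + ε) : z ≤ w := by
  rw [Complex.le_def]
  have him : z.im = w.im := by
    have := (Complex.le_def.mp (h 1 one_pos)).2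
    simpa using this
  refine ⟨?_, him⟩
  refine le_of_forall_pos_le_add fun ε hε => ?_
  have := (Complex.le_def.mp (h ε hε)).1
  simpa using this

lemma inner_self_ofReal (v : H) : ⟪v, v⟫ = ((‖v‖ ^ 2 : ℝ) : ℂ) := by
  rw [@inner_self_eq_norm_sq_to_K ℂ]
  norm_cast

lemma shorted_le_quad (A : X →ₗ[ℂ] (X →ₗ⋆[ℂ] ℂ)) (B : Y →ₗ[ℂ] (X →ₗ⋆[ℂ] ℂ))
    (D : Y →ₗ[ℂ] (Y →ₗ⋆[ℂ] ℂ)) (R : X →ₗ[ℂ] H) (T : Y →ₗ[ℂ] H)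
    (hR : ∀ x, A x = adjMap R (R x)) (hT : ∀ y, adjMap R (T y) = B y) (x : X) (y : Y) :
    (D y - adjMap T (T y)) y ≤ (A x + B y) x + ((Btilde B) x + D y) y := by
  rw [quad_eq A B D R T hR hT x y, inner_self_ofReal]
  exact le_add_of_nonneg_left (by rw [Complex.zero_le_real]; positivity)

end Helpers

theorem schur_stmt10 {X Y H H₁ : Type} [AddCommGroup X] [Module ℂ X]
    [AddCommGroup Y] [Module ℂ Y]
    [NormedAddCommGroup H] [InnerProductSpace ℂ H] [CompleteSpace H]
    [NormedAddCommGroup H₁] [InnerProductSpace ℂ H₁] [CompleteSpace H₁]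
    (A : X →ₗ[ℂ] (X →ₗ⋆[ℂ] ℂ)) (B : Y →ₗ[ℂ] (X →ₗ⋆[ℂ] ℂ))
    (D : Y →ₗ[ℂ] (Y →ₗ⋆[ℂ] ℂ))
    (A₁ : X →ₗ[ℂ] (X →ₗ⋆[ℂ] ℂ)) (B₁ : Y →ₗ[ℂ] (X →ₗ⋆[ℂ] ℂ))
    (D₁ : Y →ₗ[ℂ] (Y →ₗ⋆[ℂ] ℂ))
    (R : X →ₗ[ℂ] H) (T : Y →ₗ[ℂ] H)
    (R₁ : X →ₗ[ℂ] H₁) (T₁ : Y →ₗ[ℂ] H₁)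
    (hDh : ∀ y₁ y₂, D y₁ y₂ = conj (D y₂ y₁))
    (hD₁h : ∀ y₁ y₂, D₁ y₁ y₂ = conj (D₁ y₂ y₁))
    (hR : ∀ x, A x = adjMap R (R x))
    (hT : ∀ y, adjMap R (T y) = B y)
    (hTran : ∀ y, T y ∈ closure (Set.range R))
    (hR₁ : ∀ x, A₁ x = adjMap R₁ (R₁ x))
    (hT₁ : ∀ y, adjMap R₁ (T₁ y) = B₁ y)
    (hT₁ran : ∀ y, T₁ y ∈ closure (Set.range R₁)) :
    -- (i) 𝒮(𝐀) ≤ 𝐀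
    (∀ (x : X) (y : Y),
        (D y - adjMap T (T y)) y ≤ (A x + B y) x + ((Btilde B) x + D y) y) ∧
      -- (i) ker 𝐀 ⊆ ker 𝒮(𝐀)
      (∀ (x : X) (y : Y), A x + B y = 0 → Btilde B x + D y = 0 →
        D y - adjMap T (T y) = 0) ∧
      -- (ii) 𝐀 ≤ 𝐀₁ → 𝒮(𝐀) ≤ 𝒮(𝐀₁)
      ((∀ (x : X) (y : Y),
          (A x + B y) x + ((Btilde B) x + D y) y ≤
            (A₁ x + B₁ y) x + ((Btilde B₁) x + D₁ y) y) →
        ∀ y : Y, (D y - adjMap T (T y)) y ≤ (D₁ y - adjMap T₁ (T₁ y)) y) ∧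
      -- (iii) 𝐀 ≥ 0 → 𝒮(𝐀) ≥ 0
      ((∀ (x : X) (y : Y), 0 ≤ (A x + B y) x + ((Btilde B) x + D y) y) →
        ∀ y : Y, 0 ≤ (D y - adjMap T (T y)) y) := by
  refine ⟨fun x y => shorted_le_quad A B D R T hR hT x y, ?_, ?_, ?_⟩
  · intro x y hA0 hB0
    have horth : ∀ x' : X, (inner ℂ (R x') (R x + T y) : ℂ) = 0 := by
      intro x'
      have h1 := congrArg (fun f => f x') hA0
      simp only [LinearMap.add_apply, LinearMap.zero_apply] at h1
      have hAx : A x x' = (inner ℂ (R x') (R x) : ℂ) := by rw [hR]; rfl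
      have hBx : B y x' = (inner ℂ (R x') (T y) : ℂ) := by rw [← hT]; rfl
      rw [hAx, hBx] at h1
      rw [inner_add_right]; exact h1
    have hq : R x + T y ∈ closure (Set.range R) := by
      refine map_mem_closure (f := fun h : H => R x + h)
        (continuous_const.add continuous_id) (hTran y) ?_
      rintro _ ⟨x', rfl⟩
      exact ⟨x + x', by rw [map_add]⟩
    have hcl : IsClosed {v : H | (inner ℂ (R x + T y) v : ℂ) = 0} :=
      isClosed_eq (continuous_const.inner continuous_id) continuous_const
    have hsub : Set.range R ⊆ {v : H | (inner ℂ (R x + T y) v : ℂ) = 0} := by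
      rintro _ ⟨x', rfl⟩
      rw [Set.mem_setOf_eq, ← inner_conj_symm, horth x', map_zero]
    have hq0 : R x + T y = 0 :=
      inner_self_eq_zero.mp (hcl.closure_subset_iff.mpr hsub hq)
    have hTy : T y = -R x := by rwa [add_comm, add_eq_zero_iff_eq_neg] at hq0
    ext y'
    have h2 := congrArg (fun f => f y') hB0
    simp only [LinearMap.add_apply, LinearMap.zero_apply, Btilde_apply'] at h2
    have hB' : B y' x = (inner ℂ (R x) (T y') : ℂ) := by rw [← hT]; rfl
    rw [hB', inner_conj_symm] at h2
    simp only [LinearMap.sub_apply, adjMap_apply', LinearMap.zero_apply, hTy, inner_neg_right]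
    linear_combination h2
  · intro hle y
    apply complex_le_of_forall_add
    intro ε hε
    obtain ⟨x, hx⟩ := approx R₁ T₁ hT₁ran y hε
    calc (D y - adjMap T (T y)) y
        ≤ (A x + B y) x + ((Btilde B) x + D y) y :=
          shorted_le_quad A B D R T hR hT x y
      _ ≤ (A₁ x + B₁ y) x + ((Btilde B₁) x + D₁ y) y := hle x y
      _ = ((‖R₁ x + T₁ y‖ ^ 2 : ℝ) : ℂ) + (D₁ y - adjMap T₁ (T₁ y)) y := by
          rw [quad_eq A₁ B₁ D₁ R₁ T₁ hR₁ hT₁ x y, inner_self_ofReal]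
      _ ≤ (D₁ y - adjMap T₁ (T₁ y)) y + (ε : ℝ) := by
          rw [add_comm]
          exact add_le_add_right (by exact_mod_cast hx.le) _
  · intro hpos y
    apply complex_le_of_forall_add
    intro ε hε
    obtain ⟨x, hx⟩ := approx R T hTran y hε
    have h0 := hpos x y
    rw [quad_eq A B D R T hR hT x y, inner_self_ofReal] at h0
    calc (0 : ℂ) ≤ ((‖R x + T y‖ ^ 2 : ℝ) : ℂ) + (D y - adjMap T (T y)) y := h0
      _ ≤ (D y - adjMap T (T y)) y + (ε : ℝ) := by
          rw [add_comm]
          exact add_le_add_right (by exact_mod_cast hx.le) _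
end
end

section
/- Operators A : X → X' and B : Y → X' form a positive pair if and only if there exists a non-negative D : Y → Y' such that the block operator [[A, B],[B~, D]] is non-negative. Moreover, when (A, B) is a positive pair, 𝐀_ex := [[A, B],[B~, ω(A,B)]] is the minimal element (in Loewner ordering of the lower-right block) among all such non-negative completions. -/
open scoped ComplexOrder ComplexConjugate
open Complex

noncomputable section

theorem aux_cs {a d : ℝ} {b : ℂ}
    (h : ∀ s : ℝ, 0 ≤ a * (s * s) - 2 * ‖b‖ * s + d) :
    ‖b‖ ^ 2 ≤ a * d := by
  have h2 := discrim_le_zero (a := a) (b := -(2 * ‖b‖)) (c := d)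
    (fun s => by have := h s; nlinarith)
  rw [discrim] at h2
  nlinarith [h2]

theorem aux_inner_self_eq {H : Type} [NormedAddCommGroup H] [InnerProductSpace ℂ H]
    (v : H) : (inner ℂ v v : ℂ) = Complex.ofReal (‖v‖ ^ 2) := by
  rw [inner_self_eq_norm_sq_to_K]
  show Complex.ofReal ‖v‖ ^ 2 = _
  rw [← Complex.ofReal_pow]

theorem aux_inner_self_nonneg {H : Type} [NormedAddCommGroup H] [InnerProductSpace ℂ H]
    (v : H) : (0 : ℂ) ≤ inner ℂ v v := by
  rw [aux_inner_self_eq]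
  exact Complex.zero_le_real.mpr (sq_nonneg _)

theorem aux_unique {X H : Type} [AddCommGroup X] [Module ℂ X]
    [NormedAddCommGroup H] [InnerProductSpace ℂ H]
    (R : X →ₗ[ℂ] H) {t : H} (ht : t ∈ (LinearMap.range R).topologicalClosure)
    (h0 : ∀ x, (inner ℂ (R x) t : ℂ) = 0) : t = 0 := by
  have hS : IsClosed {h : H | (inner ℂ h t : ℂ) = 0} :=
    isClosed_eq (Continuous.inner continuous_id continuous_const) continuous_const
  have hsub : (↑(LinearMap.range R).topologicalClosure : Set H) ⊆
      {h : H | (inner ℂ h t : ℂ) = 0} := by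
    rw [Submodule.topologicalClosure_coe]
    refine closure_minimal ?_ hS
    rintro _ ⟨x, rfl⟩
    exact h0 x
  exact inner_self_eq_zero.mp (hsub ht)

theorem aux_exists {X H : Type} [AddCommGroup X] [Module ℂ X]
    [NormedAddCommGroup H] [InnerProductSpace ℂ H] [CompleteSpace H]
    (R : X →ₗ[ℂ] H) (ℓ : X →ₗ[ℂ] ℂ) (c : ℝ)
    (hb : ∀ x, ‖ℓ x‖ ≤ c * ‖R x‖) :
    ∃ t ∈ (LinearMap.range R).topologicalClosure,
      ∀ x, (inner ℂ (R x) t : ℂ) = conj (ℓ x) := by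
  have hker : LinearMap.ker R ≤ LinearMap.ker ℓ := by
    intro x hx
    have hx' : R x = 0 := hx
    have := hb x
    rw [hx', norm_zero, mul_zero] at this
    simpa [LinearMap.mem_ker] using norm_le_zero_iff.mp this
  set f₀ : (LinearMap.range R) →ₗ[ℂ] ℂ :=
    ((LinearMap.ker R).liftQ ℓ hker) ∘ₗ (R.quotKerEquivRange).symm.toLinearMap with hf₀def
  have hf₀ : ∀ (x : X) (h : R x ∈ LinearMap.range R), f₀ ⟨R x, h⟩ = ℓ x := by
    intro x h
    simp [hf₀def]
  have hf₀bound : ∀ v : LinearMap.range R, ‖f₀ v‖ ≤ c * ‖v‖ := by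
    rintro ⟨_, ⟨x, rfl⟩⟩
    rw [hf₀ x ⟨x, rfl⟩]
    simpa using hb x
  set f₁ : (LinearMap.range R) →L[ℂ] ℂ := f₀.mkContinuous c hf₀bound with hf₁def
  obtain ⟨g, hg, -⟩ := exists_extension_norm_eq (LinearMap.range R) f₁
  set t0 : H := (InnerProductSpace.toDual ℂ H).symm g with ht0def
  set K := (LinearMap.range R).topologicalClosure with hKdef
  haveI : CompleteSpace K := ((LinearMap.range R).isClosed_topologicalClosure).completeSpace_coe
  refine ⟨(K.orthogonalProjectionOnto t0 : H), (K.orthogonalProjectionOnto t0).2, ?_⟩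
  intro x
  have hRxK : R x ∈ K := (LinearMap.range R).le_topologicalClosure ⟨x, rfl⟩
  have horth : t0 - (K.orthogonalProjectionOnto t0 : H) ∈ Kᗮ :=
    K.sub_starProjection_mem_orthogonal t0
  have h1 : (inner ℂ (R x) (t0 - (K.orthogonalProjectionOnto t0 : H)) : ℂ) = 0 :=
    (Submodule.mem_orthogonal K _).mp horth (R x) hRxK
  have h2 : (inner ℂ (R x) t0 : ℂ) = inner ℂ (R x) (K.orthogonalProjectionOnto t0 : H) := by
    rw [inner_sub_right] at h1; linear_combination h1
  rw [← h2]
  have h3 : (inner ℂ t0 (R x) : ℂ) = g (R x) := InnerProductSpace.toDual_symm_apply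
  have h4 : g (R x) = ℓ x := by
    have := hg ⟨R x, ⟨x, rfl⟩⟩
    rw [this, hf₁def]
    exact hf₀ x ⟨x, rfl⟩
  rw [← inner_conj_symm, h3, h4]

theorem schur_stmt16 {X Y H : Type} [AddCommGroup X] [Module ℂ X]
    [AddCommGroup Y] [Module ℂ Y]
    [NormedAddCommGroup H] [InnerProductSpace ℂ H] [CompleteSpace H]
    (A : X →ₗ[ℂ] (X →ₗ⋆[ℂ] ℂ)) (B : Y →ₗ[ℂ] (X →ₗ⋆[ℂ] ℂ))
    (R : X →ₗ[ℂ] H) (hR : ∀ x, A x = adjMap R (R x)) :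
    ((∃ T : Y →ₗ[ℂ] H, (∀ y, adjMap R (T y) = B y) ∧
          ∀ y, T y ∈ closure (Set.range R)) ↔
        ∃ D : Y →ₗ[ℂ] (Y →ₗ⋆[ℂ] ℂ), (∀ y, 0 ≤ D y y) ∧
          ∀ (x : X) (y : Y), 0 ≤ (A x + B y) x + ((Btilde B) x + D y) y) ∧
      ∀ T : Y →ₗ[ℂ] H, (∀ y, adjMap R (T y) = B y) →
        (∀ y, T y ∈ closure (Set.range R)) →
        ∀ D : Y →ₗ[ℂ] (Y →ₗ⋆[ℂ] ℂ), (∀ y, 0 ≤ D y y) →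
          (∀ (x : X) (y : Y), 0 ≤ (A x + B y) x + ((Btilde B) x + D y) y) →
          ∀ y, (adjMap T (T y)) y ≤ D y y := by
  have hclosure_eq : closure (Set.range R) =
      ((LinearMap.range R).topologicalClosure : Set H) := by
    rw [Submodule.topologicalClosure_coe, LinearMap.coe_range]
  have haxx : ∀ x : X, A x x = Complex.ofReal (‖R x‖ ^ 2) := by
    intro x
    rw [hR]
    exact aux_inner_self_eq (R x)
  have hform : ∀ (x : X) (y : Y) (D : Y →ₗ[ℂ] (Y →ₗ⋆[ℂ] ℂ)),
      (A x + B y) x + ((Btilde B) x + D y) y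
        = A x x + B y x + conj (B y x) + D y y := by
    intro x y D
    show A x x + B y x + ((Btilde B x) y + D y y) = _
    show A x x + B y x + (conj (B y x) + D y y) = _
    ring
  constructor
  · constructor
    · -- forward: positive pair → completion exists
      rintro ⟨T, hT, -⟩
      refine ⟨(adjMap T).comp T, ?_, ?_⟩
      · intro y
        exact aux_inner_self_nonneg (T y)
      · intro x y
        rw [hform]
        have hB : B y x = inner ℂ (R x) (T y) := by rw [← hT y]; rfl
        have hA : A x x = inner ℂ (R x) (R x) := by rw [hR]; rfl
        have hD : ((adjMap T).comp T) y y = inner ℂ (T y) (T y) := rfl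
        rw [hA, hB, hD, inner_conj_symm]
        have : (inner ℂ (R x) (R x) : ℂ) + inner ℂ (R x) (T y) + inner ℂ (T y) (R x)
            + inner ℂ (T y) (T y) = inner ℂ (R x + T y) (R x + T y) := by
          rw [inner_add_add_self]
        rw [this]
        exact aux_inner_self_nonneg _
    · -- backward: completion exists → positive pair
      rintro ⟨D, hD, hQ⟩
      have hdre : ∀ y, 0 ≤ (D y y).re := fun y => (Complex.le_def.mp (hD y)).1
      have hCS : ∀ (x : X) (y : Y),
          ‖B y x‖ ^ 2 ≤ ‖R x‖ ^ 2 * (D y y).re := by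
        intro x y
        by_cases hb : B y x = 0
        · rw [hb]
          simp only [norm_zero]
          rw [show ((0:ℝ)^2 : ℝ) = 0 by norm_num]
          exact mul_nonneg (sq_nonneg _) (hdre y)
        apply aux_cs
        intro s
        set b := B y x with hbdef
        have habsne : ‖b‖ ≠ 0 := norm_ne_zero_iff.mpr hb
        have habs : ((‖b‖ : ℝ) : ℂ) ≠ 0 := by
          exact_mod_cast habsne
        have hbb : b * (starRingEnd ℂ) b
            = ((‖b‖ : ℝ) : ℂ) * ((‖b‖ : ℝ) : ℂ) := by
          rw [Complex.mul_conj, Complex.normSq_eq_norm_sq]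
          push_cast; ring
        set u : ℂ := -(b / ((‖b‖ : ℝ) : ℂ)) with hudef
        set c : ℂ := (s : ℂ) * u with hcdef
        have hub : (starRingEnd ℂ) u * b = -((‖b‖ : ℝ) : ℂ) := by
          rw [hudef, map_neg, map_div₀, Complex.conj_ofReal]
          field_simp
          linear_combination -hbb
        have huu : u * (starRingEnd ℂ) u = 1 := by
          rw [hudef, map_neg, map_div₀, Complex.conj_ofReal, neg_mul_neg,
            div_mul_div_comm, hbb, div_self (mul_ne_zero habs habs)]
        have hcc : c * (starRingEnd ℂ) c = ((s * s : ℝ) : ℂ) := by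
          rw [hcdef, map_mul, Complex.conj_ofReal]
          push_cast
          linear_combination ((s : ℂ) * (s : ℂ)) * huu
        have h := hQ (c • x) y
        rw [hform] at h
        have e1 : A (c • x) (c • x) = c * ((starRingEnd ℂ) c * A x x) := by
          rw [map_smul A c x, LinearMap.smul_apply, LinearMap.map_smulₛₗ (A x) c x,
            smul_eq_mul, smul_eq_mul]
        have e2 : B y (c • x) = (starRingEnd ℂ) c * b := by
          rw [LinearMap.map_smulₛₗ (B y) c x, smul_eq_mul]
        rw [e1, e2, haxx x] at h
        have hc1 : (starRingEnd ℂ) c * b = ((-(s * ‖b‖) : ℝ) : ℂ) := by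
          rw [hcdef, map_mul, Complex.conj_ofReal, mul_assoc, hub]
          push_cast; ring
        have e3 : c * ((starRingEnd ℂ) c * ((‖R x‖ ^ 2 : ℝ) : ℂ)) +
            (starRingEnd ℂ) c * b + conj ((starRingEnd ℂ) c * b) + D y y
            = ((‖R x‖ ^ 2 * (s * s) - 2 * ‖b‖ * s : ℝ) : ℂ) + D y y := by
          rw [hc1, ← mul_assoc, hcc, Complex.conj_ofReal]
          push_cast; ring
        rw [e3] at h
        have hre := (Complex.le_def.mp h).1
        simp only [Complex.zero_re, Complex.add_re, Complex.ofReal_re] at hre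
        linarith
      -- build T
      have hbound : ∀ (y : Y) (x : X),
          ‖conj (B y x)‖ ≤ Real.sqrt ((D y y).re) * ‖R x‖ := by
        intro y x
        rw [RCLike.norm_conj]
        have h1 : ‖B y x‖ ^ 2 ≤ (‖R x‖ * Real.sqrt ((D y y).re)) ^ 2 := by
          rw [mul_pow, Real.sq_sqrt (hdre y)]
          exact hCS x y
        have h2 : ‖B y x‖ ≤ ‖R x‖ * Real.sqrt ((D y y).re) := by
          nlinarith [norm_nonneg (B y x),
            mul_nonneg (norm_nonneg (R x)) (Real.sqrt_nonneg ((D y y).re))]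
        calc ‖B y x‖ = ‖B y x‖ := rfl
          _ ≤ ‖R x‖ * Real.sqrt ((D y y).re) := h2
          _ = Real.sqrt ((D y y).re) * ‖R x‖ := mul_comm _ _
      have hex : ∀ y : Y, ∃ t ∈ (LinearMap.range R).topologicalClosure,
          ∀ x, (inner ℂ (R x) t : ℂ) = B y x := by
        intro y
        obtain ⟨t, htmem, htinner⟩ := aux_exists R
          { toFun := fun x => conj (B y x)
            map_add' := fun x₁ x₂ => by simp
            map_smul' := fun c x => by simp [LinearMap.map_smulₛₗ] }
          (Real.sqrt ((D y y).re)) (fun x => hbound y x)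
        exact ⟨t, htmem, fun x => by rw [htinner x]; simp⟩
      set T0 : Y → H := fun y => Classical.choose (hex y) with hT0def
      have hT0mem : ∀ y, T0 y ∈ (LinearMap.range R).topologicalClosure :=
        fun y => (Classical.choose_spec (hex y)).1
      have hT0inner : ∀ y x, (inner ℂ (R x) (T0 y) : ℂ) = B y x :=
        fun y x => (Classical.choose_spec (hex y)).2 x
      have hadd : ∀ y₁ y₂, T0 (y₁ + y₂) = T0 y₁ + T0 y₂ := by
        intro y₁ y₂
        have h0 : T0 (y₁ + y₂) - (T0 y₁ + T0 y₂) = 0 := by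
          apply aux_unique R
            (Submodule.sub_mem _ (hT0mem _) (Submodule.add_mem _ (hT0mem _) (hT0mem _)))
          intro x
          rw [inner_sub_right, inner_add_right, hT0inner, hT0inner, hT0inner, map_add,
            LinearMap.add_apply]
          ring
        rw [sub_eq_zero] at h0
        exact h0
      have hsmul : ∀ (c : ℂ) (y : Y), T0 (c • y) = c • T0 y := by
        intro c y
        have h0 : T0 (c • y) - c • T0 y = 0 := by
          apply aux_unique R
            (Submodule.sub_mem _ (hT0mem _) (Submodule.smul_mem _ c (hT0mem _)))
          intro x
          rw [inner_sub_right, inner_smul_right, hT0inner, hT0inner, map_smul,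
            LinearMap.smul_apply, smul_eq_mul]
          ring
        rw [sub_eq_zero] at h0
        exact h0
      refine ⟨{ toFun := T0, map_add' := hadd, map_smul' := hsmul }, ?_, ?_⟩
      · intro y
        refine LinearMap.ext fun x => ?_
        exact hT0inner y x
      · intro y
        rw [hclosure_eq]
        exact hT0mem y
  · -- minimality
    intro T hT hTmem D hD hQ y
    have hTT : (adjMap T (T y)) y = inner ℂ (T y) (T y) := rfl
    rw [hTT]
    have him : (D y y).im = 0 := ((Complex.le_def.mp (hD y)).2).symm
    have hre : ‖T y‖ ^ 2 ≤ (D y y).re := by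
      by_contra hcon
      push_neg at hcon
      set ε : ℝ := Real.sqrt (‖T y‖ ^ 2 - (D y y).re) with hεdef
      have hε : 0 < ε := Real.sqrt_pos.mpr (by linarith)
      have hmem : -(T y) ∈ closure (Set.range R) := by
        rw [hclosure_eq] at hTmem ⊢
        exact Submodule.neg_mem _ (hTmem y)
      obtain ⟨h', hh'mem, hh'⟩ := Metric.mem_closure_iff.mp hmem ε hε
      obtain ⟨x, rfl⟩ := hh'mem
      have h := hQ x y
      rw [hform] at h
      have hB : B y x = inner ℂ (R x) (T y) := by rw [← hT y]; rfl
      rw [hB, haxx x] at h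
      have hre0 := (Complex.le_def.mp h).1
      simp only [Complex.add_re, Complex.zero_re, Complex.ofReal_re, Complex.conj_re] at hre0
      have hnorm : ‖R x + T y‖ ^ 2 = ‖R x‖ ^ 2 + 2 * (inner ℂ (R x) (T y) : ℂ).re + ‖T y‖ ^ 2 := by
        have := @norm_add_sq ℂ _ _ _ _ (R x) (T y)
        simpa [RCLike.re_to_complex] using this
      have hdist : ‖R x + T y‖ < ε := by
        have hd : dist (-(T y)) (R x) < ε := hh'
        rw [dist_eq_norm] at hd
        calc ‖R x + T y‖ = ‖-(T y) - R x‖ := by rw [norm_sub_rev]; congr 1; abel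
          _ < ε := hd
      have hε2 : ε ^ 2 = ‖T y‖ ^ 2 - (D y y).re := Real.sq_sqrt (by linarith)
      nlinarith [sq_nonneg ‖R x + T y‖, norm_nonneg (R x + T y)]
    rw [aux_inner_self_eq, Complex.le_def]
    refine ⟨?_, ?_⟩
    · rw [Complex.ofReal_re]; exact hre
    · rw [Complex.ofReal_im]; exact him.symm
end
end

section
/- If (A₁, B₁) and (A₂, B₂) are positive pairs (A_j : X → X', B_j : Y → X'), then (A₁ + A₂, B₁ + B₂) is a positive pair and ω(A₁ + A₂, B₁ + B₂) ≤ ω(A₁, B₁) + ω(A₂, B₂) in the Loewner ordering on Hermitian operators Y → Y'. -/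
open scoped ComplexOrder ComplexConjugate
open Complex

noncomputable section

theorem schur_stmt18 {X Y H H₁ H₂ : Type} [AddCommGroup X] [Module ℂ X]
    [AddCommGroup Y] [Module ℂ Y]
    [NormedAddCommGroup H] [InnerProductSpace ℂ H] [CompleteSpace H]
    [NormedAddCommGroup H₁] [InnerProductSpace ℂ H₁] [CompleteSpace H₁]
    [NormedAddCommGroup H₂] [InnerProductSpace ℂ H₂] [CompleteSpace H₂]
    (A₁ A₂ : X →ₗ[ℂ] (X →ₗ⋆[ℂ] ℂ)) (B₁ B₂ : Y →ₗ[ℂ] (X →ₗ⋆[ℂ] ℂ))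
    (R₁ : X →ₗ[ℂ] H₁) (hR₁ : ∀ x, A₁ x = adjMap R₁ (R₁ x))
    (T₁ : Y →ₗ[ℂ] H₁) (hT₁ : ∀ y, adjMap R₁ (T₁ y) = B₁ y)
    (hT₁ran : ∀ y, T₁ y ∈ closure (Set.range R₁))
    (R₂ : X →ₗ[ℂ] H₂) (hR₂ : ∀ x, A₂ x = adjMap R₂ (R₂ x))
    (T₂ : Y →ₗ[ℂ] H₂) (hT₂ : ∀ y, adjMap R₂ (T₂ y) = B₂ y)
    (hT₂ran : ∀ y, T₂ y ∈ closure (Set.range R₂))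
    -- (R, H): a square root of A₁ + A₂
    (R : X →ₗ[ℂ] H) (hR : ∀ x, A₁ x + A₂ x = adjMap R (R x)) :
    ∃ T : Y →ₗ[ℂ] H, (∀ y, adjMap R (T y) = B₁ y + B₂ y) ∧
      (∀ y, T y ∈ closure (Set.range R)) ∧
      ∀ y, (adjMap T (T y)) y ≤ (adjMap T₁ (T₁ y)) y + (adjMap T₂ (T₂ y)) y := by
  classical
  let E := WithLp 2 (H₁ × H₂)
  let R₀ : X →ₗ[ℂ] E :=
    (WithLp.linearEquiv 2 ℂ (H₁ × H₂)).symm.toLinearMap ∘ₗ (R₁.prod R₂)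
  let ι : Y →ₗ[ℂ] E :=
    (WithLp.linearEquiv 2 ℂ (H₁ × H₂)).symm.toLinearMap ∘ₗ (T₁.prod T₂)
  have hR₀fst : ∀ x, (R₀ x).fst = R₁ x := fun x => rfl
  have hR₀snd : ∀ x, (R₀ x).snd = R₂ x := fun x => rfl
  have hιfst : ∀ y, (ι y).fst = T₁ y := fun y => rfl
  have hιsnd : ∀ y, (ι y).snd = T₂ y := fun y => rfl
  -- key inner product identities
  have hinnerR₀ : ∀ x x' : X,
      (inner ℂ (R₀ x) (R₀ x') : ℂ) = inner ℂ (R₁ x) (R₁ x') + inner ℂ (R₂ x) (R₂ x') :=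
    fun x x' => WithLp.prod_inner_apply _ _
  have hinner : ∀ x x' : X, (inner ℂ (R x) (R x') : ℂ) = inner ℂ (R₀ x) (R₀ x') := by
    intro x x'
    have h := congrArg (fun f => f x) (hR x')
    have h1 := congrArg (fun f => f x) (hR₁ x')
    have h2 := congrArg (fun f => f x) (hR₂ x')
    simp only [LinearMap.add_apply] at h
    simp only [adjMap, LinearMap.coe_mk, AddHom.coe_mk] at h h1 h2
    rw [hinnerR₀, ← h1, ← h2, ← h]
  have hnorm : ∀ x : X, ‖R x‖ = ‖R₀ x‖ := by
    intro x
    have h := hinner x x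
    rw [inner_self_eq_norm_sq_to_K, inner_self_eq_norm_sq_to_K] at h
    have h' : ‖R x‖ ^ 2 = ‖R₀ x‖ ^ 2 := by
      exact_mod_cast h
    nlinarith [norm_nonneg (R x), norm_nonneg (R₀ x), sq_nonneg (‖R x‖ - ‖R₀ x‖)]
  have hker : LinearMap.ker R₀ ≤ LinearMap.ker R := by
    intro x hx
    rw [LinearMap.mem_ker] at hx ⊢
    have := hnorm x
    rw [hx, norm_zero, norm_eq_zero] at this
    exact this
  -- the partial isometry on the range of R₀
  let φ : ↥(LinearMap.range R₀) →ₗ[ℂ] H :=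
    (Submodule.liftQ (LinearMap.ker R₀) R hker) ∘ₗ
      (LinearMap.quotKerEquivRange R₀).symm.toLinearMap
  have hφ : ∀ (x : X) (h : R₀ x ∈ LinearMap.range R₀), φ ⟨R₀ x, h⟩ = R x := by
    intro x h
    show Submodule.liftQ (LinearMap.ker R₀) R hker
        ((LinearMap.quotKerEquivRange R₀).symm ⟨R₀ x, h⟩) = R x
    rw [LinearMap.quotKerEquivRange_symm_apply_image]
    simp [Submodule.mkQ_apply, Submodule.liftQ_apply]
  have hφnorm : ∀ v : ↥(LinearMap.range R₀), ‖φ v‖ = ‖v‖ := by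
    rintro ⟨v, x, rfl⟩
    rw [hφ x (LinearMap.mem_range_self R₀ x)]
    rw [hnorm x]
    rfl
  let φc : ↥(LinearMap.range R₀) →L[ℂ] H :=
    φ.mkContinuous 1 (fun v => by rw [hφnorm, one_mul])
  have hφc : ∀ v, φc v = φ v := fun v => rfl
  -- the closure of the range of R₀
  let S₀ : Submodule ℂ E := (LinearMap.range R₀).topologicalClosure
  have hS₀le : LinearMap.range R₀ ≤ S₀ := Submodule.le_topologicalClosure _
  let e : ↥(LinearMap.range R₀) →ₗ[ℂ] ↥S₀ := Submodule.inclusion hS₀le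
  have henorm : ∀ v, ‖e v‖ = ‖v‖ := fun v => rfl
  let ec : ↥(LinearMap.range R₀) →L[ℂ] ↥S₀ :=
    e.mkContinuous 1 (fun v => by rw [henorm, one_mul])
  have hec : ∀ v, ((ec v : ↥S₀) : E) = (v : E) := fun v => rfl
  have h_unif : IsUniformInducing ec :=
    (AddMonoidHomClass.isometry_of_norm ec (fun v => rfl)).isUniformInducing
  have h_dense : DenseRange ec := by
    intro w
    rw [closure_subtype]
    have himg : (Subtype.val '' Set.range ec : Set E) = (LinearMap.range R₀ : Set E) := by
      ext z
      constructor
      · rintro ⟨v, ⟨u, rfl⟩, rfl⟩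
        exact u.2
      · rintro hz
        exact ⟨ec ⟨z, hz⟩, ⟨⟨z, hz⟩, rfl⟩, rfl⟩
    rw [himg, ← Submodule.topologicalClosure_coe]
    exact w.2
  -- extend φ to the closure
  let ψ : ↥S₀ →L[ℂ] H := φc.extend ec
  have hψe : ∀ v, ψ (ec v) = φc v := fun v =>
    ContinuousLinearMap.extend_eq (f := φc) (e := ec) h_dense h_unif v
  have hψnorm : ∀ w : ↥S₀, ‖ψ w‖ = ‖w‖ := by
    intro w
    refine h_dense.induction_on w ?_ ?_
    · exact isClosed_eq (continuous_norm.comp ψ.continuous) continuous_norm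
    · intro v
      rw [hψe, hφc, hφnorm v, ← henorm v]
      rfl
  let ψi : ↥S₀ →ₗᵢ[ℂ] H := ⟨ψ.toLinearMap, hψnorm⟩
  have hψi : ∀ w, ψi w = ψ w := fun w => rfl
  -- the orthogonal projection onto S₀
  let P : E →L[ℂ] ↥S₀ := S₀.orthogonalProjectionOnto
  -- the map T
  let T : Y →ₗ[ℂ] H := ψ.toLinearMap ∘ₗ (P.toLinearMap ∘ₗ ι)
  have hT : ∀ y, T y = ψ (P (ι y)) := fun y => rfl
  -- inner products against R x
  have hinnerT : ∀ (x : X) (y : Y),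
      (inner ℂ (R x) (T y) : ℂ) = inner ℂ (R₁ x) (T₁ y) + inner ℂ (R₂ x) (T₂ y) := by
    intro x y
    have hx : R₀ x ∈ LinearMap.range R₀ := LinearMap.mem_range_self R₀ x
    have hRx : R x = ψ (ec ⟨R₀ x, hx⟩) := by rw [hψe, hφc, hφ]
    have step1 : (inner ℂ (R x) (T y) : ℂ) = inner ℂ (ec ⟨R₀ x, hx⟩) (P (ι y)) := by
      rw [hRx, hT]
      exact ψi.inner_map_map _ _
    have step2 : (inner ℂ (ec ⟨R₀ x, hx⟩) (P (ι y)) : ℂ) = inner ℂ (R₀ x) ((P (ι y) : ↥S₀) : E) :=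
      rfl
    have hmem : R₀ x ∈ S₀ := hS₀le hx
    have step3 : (inner ℂ (R₀ x) ((P (ι y) : ↥S₀) : E) : ℂ) = inner ℂ (R₀ x) (ι y) := by
      have horth : (inner ℂ (ι y - ((P (ι y) : ↥S₀) : E)) (R₀ x) : ℂ) = 0 :=
        by
          have := S₀.starProjection_inner_eq_zero (ι y) (R₀ x) hmem
          rwa [Submodule.starProjection_apply] at this
      have : (inner ℂ (R₀ x) (ι y - ((P (ι y) : ↥S₀) : E)) : ℂ) = 0 := by
        rw [← inner_conj_symm, horth, map_zero]
      rw [inner_sub_right] at this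
      linear_combination -this
    rw [step1, step2, step3]
    exact WithLp.prod_inner_apply _ _
  refine ⟨T, ?_, ?_, ?_⟩
  · -- adjMap R (T y) = B₁ y + B₂ y
    intro y
    ext x
    show (inner ℂ (R x) (T y) : ℂ) = B₁ y x + B₂ y x
    rw [hinnerT x y, ← hT₁ y, ← hT₂ y]
    rfl
  · -- range
    intro y
    rw [hT]
    refine h_dense.induction_on (P (ι y)) ?_ ?_
    · exact isClosed_closure.preimage ψ.continuous
    · rintro ⟨v, x, rfl⟩
      rw [hψe, hφc, hφ x (LinearMap.mem_range_self R₀ x)]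
      exact subset_closure ⟨x, rfl⟩
  · -- the Loewner bound
    intro y
    show (inner ℂ (T y) (T y) : ℂ) ≤ inner ℂ (T₁ y) (T₁ y) + inner ℂ (T₂ y) (T₂ y)
    have hrhs : (inner ℂ (T₁ y) (T₁ y) : ℂ) + inner ℂ (T₂ y) (T₂ y) = inner ℂ (ι y) (ι y) :=
      (WithLp.prod_inner_apply (ι y) (ι y)).symm
    rw [hrhs, inner_self_eq_norm_sq_to_K, inner_self_eq_norm_sq_to_K]
    have hTle : ‖T y‖ ≤ ‖ι y‖ := by
      rw [hT, hψnorm]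
      calc ‖P (ι y)‖ ≤ ‖P‖ * ‖ι y‖ := P.le_opNorm _
        _ ≤ 1 * ‖ι y‖ := by
            apply mul_le_mul_of_nonneg_right (Submodule.orthogonalProjectionOnto_norm_le S₀) (norm_nonneg _)
        _ = ‖ι y‖ := one_mul _
    have : (‖T y‖ : ℝ) ^ 2 ≤ (‖ι y‖ : ℝ) ^ 2 :=
      pow_le_pow_left₀ (norm_nonneg _) hTle 2
    calc ((‖T y‖ : ℂ)) ^ 2 = ((‖T y‖ ^ 2 : ℝ) : ℂ) := by push_cast; ring
      _ ≤ ((‖ι y‖ ^ 2 : ℝ) : ℂ) := by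
          rw [Complex.real_le_real]; exact this
      _ = ((‖ι y‖ : ℂ)) ^ 2 := by push_cast; ring
end
end

section
/- Let (A, B) be a positive pair, (R, H) a square root of A, T := R*^{[-1]}B, and P_B the orthogonal projection onto the closure of ran T in H. Then the extremal operator 𝐀_ex = [[A, B],[B~, ω(A,B)]] is doubly extremal (i.e., ω(ω(A,B), B~) = A) if and only if ker T* = ker R*; equivalently, if and only if closure(ran T) = closure(ran R). -/
open scoped ComplexOrder ComplexConjugate
open Complex

noncomputable section

lemma inner_zero_of_mem_closure {H : Type*} [NormedAddCommGroup H]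
    [InnerProductSpace ℂ H] {s : Set H} {h : H}
    (hs : ∀ v ∈ s, (inner ℂ v h : ℂ) = 0) {v : H} (hv : v ∈ closure s) :
    (inner ℂ v h : ℂ) = 0 := by
  have hcl : IsClosed {u : H | (inner ℂ u h : ℂ) = 0} :=
    isClosed_eq (continuous_id.inner continuous_const) continuous_const
  exact closure_minimal hs hcl hv

theorem schur_stmt19 {X Y H : Type} [AddCommGroup X] [Module ℂ X]
    [AddCommGroup Y] [Module ℂ Y]
    [NormedAddCommGroup H] [InnerProductSpace ℂ H] [CompleteSpace H]
    (A : X →ₗ[ℂ] (X →ₗ⋆[ℂ] ℂ)) (B : Y →ₗ[ℂ] (X →ₗ⋆[ℂ] ℂ))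
    (R : X →ₗ[ℂ] H) (hR : ∀ x, A x = adjMap R (R x))
    (T : Y →ₗ[ℂ] H) (hT : ∀ y, adjMap R (T y) = B y)
    (hTran : ∀ y, T y ∈ closure (Set.range R))
    -- T'' := T*⁽⁻¹⁾ B~, the operator associated with the positive pair (ω(A,B), B~),
    -- where (T, H) is a square root of ω(A,B):
    (T'' : X →ₗ[ℂ] H) (hT'' : ∀ x, adjMap T (T'' x) = Btilde B x)
    (hT''ran : ∀ x, T'' x ∈ closure (Set.range T)) :
    -- 𝐀_ex is doubly extremal iff ker T* = ker R*, iff closure ran T = closure ran R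
    ((∀ x, adjMap T'' (T'' x) = A x) ↔
        ∀ h : H, adjMap T h = 0 ↔ adjMap R h = 0) ∧
      ((∀ x, adjMap T'' (T'' x) = A x) ↔
        closure (Set.range T) = closure (Set.range R)) := by
  -- basic inner ℂ product identity: ⟪T y, T'' x⟫ = ⟪T y, R x⟫
  have hinner : ∀ (x : X) (y : Y), (inner ℂ (T y) (T'' x) : ℂ) = inner ℂ (T y) (R x) := by
    intro x y
    have h1 := congrArg (fun f => f y) (hT'' x)
    have h2 := congrArg (fun f => f x) (hT y)
    simp only [adjMap, Btilde, LinearMap.coe_mk, AddHom.coe_mk] at h1 h2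
    rw [h1, ← h2, inner_conj_symm]
  -- hence R x - T'' x ⟂ closure (range T)
  have horth : ∀ (x : X), ∀ v ∈ closure (Set.range T),
      (inner ℂ v (R x - T'' x) : ℂ) = 0 := by
    intro x
    refine fun v hv => inner_zero_of_mem_closure ?_ hv
    rintro _ ⟨y, rfl⟩
    rw [inner_sub_right, hinner, sub_self]
  -- unfold the doubly-extremal condition
  have hDE : (∀ x, adjMap T'' (T'' x) = A x) ↔
      ∀ x x' : X, (inner ℂ (T'' x') (T'' x) : ℂ) = inner ℂ (R x') (R x) := by
    constructor
    · intro h x x'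
      have := congrArg (fun f => f x') ((h x).trans (hR x))
      simpa only [adjMap, LinearMap.coe_mk, AddHom.coe_mk] using this
    · intro h x
      rw [hR x]
      ext x'
      simpa only [adjMap, LinearMap.coe_mk, AddHom.coe_mk] using h x x'
  -- doubly extremal ↔ R = T''
  have hRT : (∀ x, adjMap T'' (T'' x) = A x) ↔ ∀ x, R x = T'' x := by
    rw [hDE]
    constructor
    · intro h x
      have h0 : (inner ℂ (T'' x) (R x - T'' x) : ℂ) = 0 :=
        horth x _ (hT''ran x)
      have h1 : (inner ℂ (T'' x) (R x) : ℂ) = inner ℂ (T'' x) (T'' x) := by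
        rw [inner_sub_right] at h0; linear_combination h0
      have h2 : (inner ℂ (R x - T'' x) (R x - T'' x) : ℂ) = 0 := by
        rw [inner_sub_left, inner_sub_right, inner_sub_right]
        have h3 : (inner ℂ (R x) (T'' x) : ℂ) = inner ℂ (T'' x) (T'' x) := by
          rw [← inner_conj_symm, h1, inner_conj_symm]
        rw [h1, h3, h x x]
        ring
      have := inner_self_eq_zero.mp h2
      rw [sub_eq_zero] at this
      exact this
    · intro h x x'
      rw [← h x, ← h x']
  -- R = T'' ↔ range R ⊆ closure (range T)
  have hRmem : (∀ x, R x = T'' x) ↔ ∀ x, R x ∈ closure (Set.range T) := by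
    constructor
    · intro h x; rw [h x]; exact hT''ran x
    · intro h x
      have hcoe : closure (Set.range T)
          = ((LinearMap.range T).topologicalClosure : Set H) := by
        rw [Submodule.topologicalClosure_coe, LinearMap.coe_range]
      have h1 : R x ∈ (LinearMap.range T).topologicalClosure := by
        rw [← SetLike.mem_coe, ← hcoe]; exact h x
      have h2 : T'' x ∈ (LinearMap.range T).topologicalClosure := by
        rw [← SetLike.mem_coe, ← hcoe]; exact hT''ran x
      have hsub : R x - T'' x ∈ closure (Set.range T) := by
        rw [hcoe]; exact sub_mem h1 h2
      have := inner_self_eq_zero.mp (horth x _ hsub)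
      rw [sub_eq_zero] at this
      exact this
  -- membership in closure (range T) ↔ the kernel condition, etc.
  constructor
  · rw [hRT, hRmem]
    constructor
    · intro h h'
      constructor
      · intro hker
        ext x
        have : ∀ v ∈ Set.range T, (inner ℂ v h' : ℂ) = 0 := by
          rintro _ ⟨y, rfl⟩
          exact congrArg (fun f => f y) hker
        simpa only [adjMap, LinearMap.coe_mk, AddHom.coe_mk, LinearMap.zero_apply]
          using inner_zero_of_mem_closure this (h x)
      · intro hker
        ext y
        have : ∀ v ∈ Set.range R, (inner ℂ v h' : ℂ) = 0 := by
          rintro _ ⟨x, rfl⟩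
          exact congrArg (fun f => f x) hker
        simpa only [adjMap, LinearMap.coe_mk, AddHom.coe_mk, LinearMap.zero_apply]
          using inner_zero_of_mem_closure this (hTran y)
    · intro h x
      have hx : R x ∈ (LinearMap.range T)ᗮᗮ := by
        rw [Submodule.mem_orthogonal]
        intro u hu
        rw [Submodule.mem_orthogonal] at hu
        have hTu : adjMap T u = 0 := by
          ext y
          simpa only [adjMap, LinearMap.coe_mk, AddHom.coe_mk, LinearMap.zero_apply]
            using hu (T y) (LinearMap.mem_range_self T y)
        have hRu := (h u).mp hTu
        have := congrArg (fun f => f x) hRu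
        simp only [adjMap, LinearMap.coe_mk, AddHom.coe_mk, LinearMap.zero_apply] at this
        rw [← inner_conj_symm, this, map_zero]
      rw [Submodule.orthogonal_orthogonal_eq_closure] at hx
      have : ((LinearMap.range T).topologicalClosure : Set H)
          = closure (Set.range T) := by
        rw [Submodule.topologicalClosure_coe, LinearMap.coe_range]
      rw [← this]
      exact hx
  · rw [hRT, hRmem]
    constructor
    · intro h
      apply Set.Subset.antisymm
      · exact closure_minimal (fun v hv => by
          obtain ⟨y, rfl⟩ := hv; exact hTran y) isClosed_closure
      · exact closure_minimal (fun v hv => by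
          obtain ⟨x, rfl⟩ := hv; exact h x) isClosed_closure
    · intro h x
      rw [h]
      exact subset_closure ⟨x, rfl⟩
end
end
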